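/- Let L be a first-order language with no relation symbols, no 0-ary function symbols, and with at least one function symbol of arity ≥ 2. Let (I, ⊔) be a sup-semilattice, and endow I with the L-structure in which every n-ary function symbol (n ≥ 1) acts by funMap σ (i_0,…,i_{n-1}) = i_0 ⊔ i_1 ⊔ … ⊔ i_{n-1} (the join of the tuple). Then this L-structure is idempotent and naturally preordered, and its algebraic predecessor preorder ≤_I coincides with the semilattice partial order: for all a, b ∈ I, b ≤_I a (in the sense of the reflexive–transitive closure of the predecessor relation) if and only if b ≤ a in (I, ⊔). -/
import Mathlib


open FirstOrder

/-- `b` is an algebraic predecessor of `a` in one step: `a` is the value of some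
`n`-ary operation (`n ≥ 1`) at a tuple having `b` among its components. -/
def AlgPred {L : FirstOrder.Language} {M : Type*} (S : L.Structure M) (b a : M) : Prop :=
  ∃ n : ℕ, 0 < n ∧ ∃ (σ : L.Functions n) (t : Fin n → M) (k : Fin n),
    S.funMap σ t = a ∧ t k = b

/-- The algebraic predecessor preorder: the reflexive–transitive closure of `AlgPred`. -/
def AlgPredLE {L : FirstOrder.Language} {M : Type*} (S : L.Structure M) : M → M → Prop :=
  Relation.ReflTransGen (AlgPred S)

/-- A map is an `L`-homomorphism if it preserves every operation. -/
def IsAlgHom {L : FirstOrder.Language} {M N : Type*} (S : L.Structure M) (T : L.Structure N)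
    (f : M → N) : Prop :=
  ∀ (n : ℕ) (σ : L.Functions n) (t : Fin n → M), f (S.funMap σ t) = T.funMap σ (fun k => f (t k))

/-- An L-structure is idempotent if every operation of arity `n ≥ 1` applied to a
constant tuple returns its value. -/
def IsIdemStruct {L : FirstOrder.Language} {M : Type*} (S : L.Structure M) : Prop :=
  ∀ (n : ℕ), 0 < n → ∀ (σ : L.Functions n) (a : M), S.funMap σ (fun _ => a) = a

/-- An L-structure is naturally preordered if every operation of arity `n ≥ 1` is
isotone with respect to the algebraic predecessor preorder. -/
def IsNatPreordered {L : FirstOrder.Language} {M : Type*} (S : L.Structure M) : Prop :=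
  ∀ (n : ℕ), 0 < n → ∀ (σ : L.Functions n) (j i : Fin n → M),
    (∀ k, AlgPredLE S (j k) (i k)) → AlgPredLE S (S.funMap σ j) (S.funMap σ i)

/-- A subset is closed if it is closed under every operation of arity `n ≥ 1`. -/
def IsClosedSubset {L : FirstOrder.Language} {M : Type*} (S : L.Structure M) (X : Set M) : Prop :=
  ∀ (n : ℕ), 0 < n → ∀ (σ : L.Functions n) (t : Fin n → M), (∀ k, t k ∈ X) → S.funMap σ t ∈ X

/-- A congruence on an L-structure: an equivalence relation compatible with every
operation of arity `n ≥ 1`. -/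
def IsCongruence {L : FirstOrder.Language} {M : Type*} (S : L.Structure M)
    (Φ : M → M → Prop) : Prop :=
  Equivalence Φ ∧ ∀ (n : ℕ), 0 < n → ∀ (σ : L.Functions n) (x y : Fin n → M),
    (∀ k, Φ (x k) (y k)) → Φ (S.funMap σ x) (S.funMap σ y)

/-- The `L`-structure on a sup-semilattice `I` in which every operation of arity
`n ≥ 1` acts by taking the join of the tuple (there are no `0`-ary symbols). -/
def slStructure (L : FirstOrder.Language) (h0 : IsEmpty (L.Functions 0))
    (I : Type*) [SemilatticeSup I] : L.Structure I where
  funMap {n} σ t :=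
    match n, σ, t with
    | 0, σ, _ => isEmptyElim σ
    | _ + 1, _, t => Finset.univ.sup' Finset.univ_nonempty t
  RelMap _ _ := False

theorem stmt13 (L : FirstOrder.Language) (hrel : ∀ n, IsEmpty (L.Relations n))
    (h0 : IsEmpty (L.Functions 0))
    (hbin : ∃ n : ℕ, 2 ≤ n ∧ Nonempty (L.Functions n))
    (I : Type*) [SemilatticeSup I] :
    IsIdemStruct (slStructure L h0 I) ∧ IsNatPreordered (slStructure L h0 I) ∧
      ∀ a b : I, AlgPredLE (slStructure L h0 I) b a ↔ b ≤ a := by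
  have hfun : ∀ (m : ℕ) (σ : L.Functions (m+1)) (t : Fin (m+1) → I),
      (slStructure L h0 I).funMap σ t = Finset.univ.sup' Finset.univ_nonempty t :=
    fun _ _ _ => rfl
  have hpred_le : ∀ b a : I, AlgPred (slStructure L h0 I) b a → b ≤ a := by
    rintro b a ⟨n, hn, σ, t, k, hfm, htk⟩
    match n, hn, σ, t, k, hfm, htk with
    | m+1, _, σ, t, k, hfm, htk =>
      subst hfm htk
      rw [hfun]
      exact Finset.le_sup' t (Finset.mem_univ k)
  have hle : ∀ a b : I, AlgPredLE (slStructure L h0 I) b a ↔ b ≤ a := by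
    intro a b
    constructor
    · intro h
      induction h with
      | refl => exact le_refl _
      | tail _ h ih => exact ih.trans (hpred_le _ _ h)
    · intro hba
      obtain ⟨n, hn2, ⟨σ⟩⟩ := hbin
      match n, hn2, σ with
      | m+2, _, σ =>
        apply Relation.ReflTransGen.single
        refine ⟨m+2, Nat.succ_pos _, σ, fun k => if k = 0 then b else a, 0, ?_, by simp⟩
        rw [hfun]
        apply le_antisymm
        · apply Finset.sup'_le
          intro k _
          by_cases h : k = 0 <;> simp [h, hba]
        · refine le_trans ?_ (Finset.le_sup' _ (Finset.mem_univ (1 : Fin (m+2))))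
          simp
  refine ⟨?_, ?_, hle⟩
  · rintro n hn σ a
    match n, hn, σ with
    | m+1, _, σ =>
      rw [hfun]
      exact Finset.sup'_const Finset.univ_nonempty a
  · rintro n hn σ j i hk
    rw [hle]
    match n, hn, σ with
    | m+1, _, σ =>
      rw [hfun, hfun]
      apply Finset.sup'_le
      intro k _
      exact le_trans ((hle _ _).mp (hk k)) (Finset.le_sup' i (Finset.mem_univ k))
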